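/- Let q = 2^ℓ with ℓ even. Then e(√q − 1, q − 1), the number of pairs (i, c) with 0 ≤ i < √q − 1 and 0 ≤ c < q − 1 such that there exists a ∈ [q] with a ≡ i (mod √q − 1) and c ≤₂ a, is O((5 + √5)^{ℓ/2}). -/

import Mathlib

open scoped Classical

open Finset

/-- `Shadow2 n m` : every bit set in `n` is also set in `m` (i.e. `n ≤₂ m`). -/
def Shadow2 (n m : ℕ) : Prop := ∀ i, n.testBit i = true → m.testBit i = true

/-- bitwise disjointness -/
def BDisj (d c : ℕ) : Prop := ∀ i, d.testBit i = true → c.testBit i = false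

noncomputable def RepF (r c1 c2 : ℕ) : Finset ℕ :=
  ((Finset.range (2^r) ×ˢ Finset.range (2^r)).filter
    (fun p => BDisj p.1 c1 ∧ BDisj p.2 c2)).image fun p => p.1 + p.2

lemma mem_RepF {r c1 c2 n : ℕ} :
    n ∈ RepF r c1 c2 ↔ ∃ d1 d2, d1 < 2^r ∧ d2 < 2^r ∧ BDisj d1 c1 ∧ BDisj d2 c2 ∧ d1 + d2 = n := by
  simp only [RepF, Finset.mem_image, Finset.mem_filter, Finset.mem_product, Finset.mem_range]
  constructor
  · rintro ⟨⟨d1, d2⟩, ⟨⟨h1, h2⟩, h3, h4⟩, h5⟩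
    exact ⟨d1, d2, h1, h2, h3, h4, h5⟩
  · rintro ⟨d1, d2, h1, h2, h3, h4, h5⟩
    exact ⟨⟨d1, d2⟩, ⟨⟨h1, h2⟩, h3, h4⟩, h5⟩

lemma RepF_lt {r c1 c2 n : ℕ} (h : n ∈ RepF r c1 c2) : n < 2^(r+1) := by
  rcases mem_RepF.mp h with ⟨d1, d2, h1, h2, _, _, h5⟩
  have : (2:ℕ)^(r+1) = 2^r + 2^r := by ring
  omega

lemma tb_high {c r i : ℕ} (hc : c < 2^r) (hi : r ≤ i) : c.testBit i = false :=
  Nat.testBit_eq_false_of_lt (lt_of_lt_of_le hc (Nat.pow_le_pow_right (by norm_num) hi))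

/-- testBit of `c + β * 2^r` for `c < 2^r`, `β ≤ 1`. -/
lemma tb_add {c β r : ℕ} (hc : c < 2^r) (hβ : β ≤ 1) (i : ℕ) :
    (c + β * 2^r).testBit i = (if i < r then c.testBit i else decide (i = r ∧ β = 1)) := by
  rcases lt_trichotomy i r with h | h | h
  · simp only [if_pos h]
    rw [Nat.testBit_eq_decide_div_mod_eq, Nat.testBit_eq_decide_div_mod_eq]
    have hdvd : (2:ℕ)^i ∣ 2^r := pow_dvd_pow 2 (le_of_lt h)
    obtain ⟨k, hk⟩ := hdvd
    have hk2 : 2 ∣ k := by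
      rcases Nat.even_or_odd k with he | ho
      · exact he.two_dvd
      · exfalso
        have : (2:ℕ)^r = 2^i * k := hk
        have h2 : (2:ℕ)^r = 2^i * 2^(r - i) := by
          rw [← pow_add]; congr 1; omega
        have : k = 2^(r-i) := by
          have hpos : (0:ℕ) < 2^i := Nat.two_pow_pos _
          exact Nat.eq_of_mul_eq_mul_left hpos (by omega)
        subst this
        have : 2 ∣ 2^(r-i) := dvd_pow_self 2 (by omega)
        exact (Nat.not_even_iff_odd.mpr ho) (even_iff_two_dvd.mpr this)
    have he : c + β * 2^r = c + 2^i * (β * k) := by rw [hk]; ring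
    have : (c + β * 2^r) / 2^i = c / 2^i + β * k := by
      rw [he, Nat.add_mul_div_left _ _ (Nat.two_pow_pos _)]
    rw [this]
    obtain ⟨k', hk'⟩ := hk2
    have h2 : β * k = 2 * (β * k') := by subst hk'; ring
    have : (c / 2^i + β * k) % 2 = c / 2^i % 2 := by
      rw [h2]; omega
    rw [this]
  · subst h
    simp only [if_neg (lt_irrefl i)]
    rw [Nat.testBit_eq_decide_div_mod_eq]
    have : (c + β * 2^i) / 2^i = β := by
      rw [Nat.add_mul_div_right _ _ (Nat.two_pow_pos _),
        Nat.div_eq_of_lt hc]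
      omega
    rw [this]
    interval_cases β <;> simp
  · have hlt : c + β * 2^r < 2^i := by
      have h1 : c + β * 2^r < 2^(r+1) := by
        have : β * 2^r ≤ 2^r := by nlinarith [Nat.two_pow_pos r]
        have : (2:ℕ)^(r+1) = 2^r + 2^r := by ring
        omega
      exact lt_of_lt_of_le h1 (Nat.pow_le_pow_right (by norm_num) (by omega))
    rw [Nat.testBit_eq_false_of_lt hlt]
    have : ¬ i < r := by omega
    simp only [if_neg this]
    have : ¬ (i = r ∧ β = 1) := by rintro ⟨rfl, _⟩; omega
    simp [this]

lemma tb_div_pow (c r i : ℕ) : (c / 2^r).testBit i = c.testBit (r + i) := by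
  induction r generalizing c with
  | zero => simp
  | succ r ih =>
    have hd : c / 2^(r+1) = (c / 2) / 2^r := by
      rw [Nat.div_div_eq_div_mul, ← pow_succ']
    rw [hd, ih, Nat.testBit_div_two]
    congr 1
    omega

lemma BDisj_mod {d c r : ℕ} (hd : d < 2^r) : BDisj d c ↔ BDisj d (c % 2^r) := by
  constructor <;> intro h i hi
  · have hir : i < r := by
      by_contra hc
      rw [tb_high hd (by omega)] at hi; exact Bool.false_ne_true hi
    rw [Nat.testBit_mod_two_pow]
    simp [hir, h i hi]
  · have hir : i < r := by
      by_contra hc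
      rw [tb_high hd (by omega)] at hi; exact Bool.false_ne_true hi
    have := h i hi
    rw [Nat.testBit_mod_two_pow] at this
    simpa [hir] using this

lemma RepF_mod (r c1 c2 : ℕ) : RepF r c1 c2 = RepF r (c1 % 2^r) (c2 % 2^r) := by
  ext n
  simp only [mem_RepF]
  constructor <;> rintro ⟨d1, d2, h1, h2, h3, h4, h5⟩
  · exact ⟨d1, d2, h1, h2, (BDisj_mod h1).mp h3, (BDisj_mod h2).mp h4, h5⟩
  · exact ⟨d1, d2, h1, h2, (BDisj_mod h1).mpr h3, (BDisj_mod h2).mpr h4, h5⟩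

lemma mem_RepF_succ {r c1 c2 β1 β2 n : ℕ} (h1 : c1 < 2^r) (h2 : c2 < 2^r)
    (hβ1 : β1 ≤ 1) (hβ2 : β2 ≤ 1) :
    n ∈ RepF (r+1) (c1 + β1 * 2^r) (c2 + β2 * 2^r) ↔
    ∃ e γ1 γ2, e ∈ RepF r c1 c2 ∧ γ1 + β1 ≤ 1 ∧ γ2 + β2 ≤ 1 ∧ n = e + (γ1 + γ2) * 2^r := by
  have hpow : (2:ℕ)^(r+1) = 2^r + 2^r := by ring
  have hpos : (0:ℕ) < 2^r := Nat.two_pow_pos _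
  constructor
  · rintro h
    rcases mem_RepF.mp h with ⟨d1, d2, hd1, hd2, hb1, hb2, hsum⟩
    set e1 := d1 % 2^r with he1
    set γ1 := d1 / 2^r with hγ1
    set e2 := d2 % 2^r with he2
    set γ2 := d2 / 2^r with hγ2
    have hγ1le : γ1 ≤ 1 := by
      rw [hγ1]; apply Nat.lt_succ_iff.mp; apply (Nat.div_lt_iff_lt_mul hpos).mpr; omega
    have hγ2le : γ2 ≤ 1 := by
      rw [hγ2]; apply Nat.lt_succ_iff.mp; apply (Nat.div_lt_iff_lt_mul hpos).mpr; omega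
    have he1lt : e1 < 2^r := Nat.mod_lt _ hpos
    have he2lt : e2 < 2^r := Nat.mod_lt _ hpos
    have hd1e : d1 = e1 + γ1 * 2^r := by
      have := Nat.mod_add_div d1 (2^r); rw [he1, hγ1, Nat.mul_comm]; omega
    have hd2e : d2 = e2 + γ2 * 2^r := by
      have := Nat.mod_add_div d2 (2^r); rw [he2, hγ2, Nat.mul_comm]; omega
    have hbe1 : BDisj e1 c1 := by
      intro i hi
      rw [he1, Nat.testBit_mod_two_pow] at hi
      have hir : i < r := by
        by_contra hc
        simp [show ¬ i < r from hc] at hi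
      have hd1i : d1.testBit i = true := by
        simp [hir] at hi; exact hi
      have := hb1 i hd1i
      rw [tb_add h1 hβ1 i, if_pos hir] at this
      exact this
    have hbe2 : BDisj e2 c2 := by
      intro i hi
      rw [he2, Nat.testBit_mod_two_pow] at hi
      have hir : i < r := by
        by_contra hc
        simp [show ¬ i < r from hc] at hi
      have hd2i : d2.testBit i = true := by
        simp [hir] at hi; exact hi
      have := hb2 i hd2i
      rw [tb_add h2 hβ2 i, if_pos hir] at this
      exact this
    have hγβ1 : γ1 + β1 ≤ 1 := by
      rcases Nat.le_one_iff_eq_zero_or_eq_one.mp hβ1 with h | h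
      · omega
      rcases Nat.le_one_iff_eq_zero_or_eq_one.mp hγ1le with h' | h'
      · omega
      exfalso
      have htb : d1.testBit r = true := by
        rw [Nat.testBit_eq_decide_div_mod_eq, ← hγ1, h']; norm_num
      have := hb1 r htb
      rw [tb_add h1 hβ1 r, if_neg (lt_irrefl r)] at this
      simp [h] at this
    have hγβ2 : γ2 + β2 ≤ 1 := by
      rcases Nat.le_one_iff_eq_zero_or_eq_one.mp hβ2 with h | h
      · omega
      rcases Nat.le_one_iff_eq_zero_or_eq_one.mp hγ2le with h' | h'
      · omega
      exfalso
      have htb : d2.testBit r = true := by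
        rw [Nat.testBit_eq_decide_div_mod_eq, ← hγ2, h']; norm_num
      have := hb2 r htb
      rw [tb_add h2 hβ2 r, if_neg (lt_irrefl r)] at this
      simp [h] at this
    refine ⟨e1 + e2, γ1, γ2, mem_RepF.mpr ⟨e1, e2, he1lt, he2lt, hbe1, hbe2, rfl⟩,
      hγβ1, hγβ2, by rw [← hsum, hd1e, hd2e]; ring⟩
  · rintro ⟨e, γ1, γ2, he, hγβ1, hγβ2, hn⟩
    rcases mem_RepF.mp he with ⟨e1, e2, he1, he2, hb1, hb2, hee⟩
    have hγ1le : γ1 ≤ 1 := by omega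
    have hγ2le : γ2 ≤ 1 := by omega
    have hm1 : γ1 * 2^r ≤ 2^r := by
      calc γ1 * 2^r ≤ 1 * 2^r := Nat.mul_le_mul_right _ hγ1le
      _ = 2^r := one_mul _
    have hm2 : γ2 * 2^r ≤ 2^r := by
      calc γ2 * 2^r ≤ 1 * 2^r := Nat.mul_le_mul_right _ hγ2le
      _ = 2^r := one_mul _
    refine mem_RepF.mpr ⟨e1 + γ1 * 2^r, e2 + γ2 * 2^r, by omega, by omega, ?_, ?_, by
      rw [hn, ← hee]; ring⟩
    · intro i hi
      rw [tb_add he1 hγ1le i] at hi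
      rw [tb_add h1 hβ1 i]
      by_cases hir : i < r
      · rw [if_pos hir] at hi ⊢
        exact hb1 i hi
      · rw [if_neg hir] at hi ⊢
        have : i = r ∧ γ1 = 1 := by simpa using hi
        have hβ0 : β1 = 0 := by omega
        simp [hβ0]
    · intro i hi
      rw [tb_add he2 hγ2le i] at hi
      rw [tb_add h2 hβ2 i]
      by_cases hir : i < r
      · rw [if_pos hir] at hi ⊢
        exact hb2 i hi
      · rw [if_neg hir] at hi ⊢
        have : i = r ∧ γ2 = 1 := by simpa using hi
        have hβ0 : β2 = 0 := by omega
        simp [hβ0]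

lemma c_decomp (c r : ℕ) : c % 2^(r+1) = c % 2^r + (c / 2^r % 2) * 2^r ∧
    c % 2^r < 2^r ∧ c / 2^r % 2 ≤ 1 := by
  have hpos : (0:ℕ) < 2^r := Nat.two_pow_pos _
  refine ⟨?_, Nat.mod_lt _ hpos, Nat.lt_succ_iff.mp (Nat.mod_lt _ (by norm_num))⟩
  have h1 : (2:ℕ)^(r+1) = 2^r * 2 := by ring
  rw [h1, Nat.mod_mul, Nat.mul_comm]

/-- key shift-down lemma: high elements come from low elements. -/
lemma RepF_shift : ∀ r c1 c2 n, 2^r + n ∈ RepF r c1 c2 → n ∈ RepF r c1 c2 := by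
  intro r
  induction r with
  | zero =>
    intro c1 c2 n h
    rcases mem_RepF.mp h with ⟨d1, d2, h1, h2, _, _, h5⟩
    omega
  | succ r ih =>
    intro c1 c2 n h
    obtain ⟨hc1, hc1lt, hβ1⟩ := c_decomp c1 (r)
    obtain ⟨hc2, hc2lt, hβ2⟩ := c_decomp c2 (r)
    rw [RepF_mod, hc1, hc2] at h ⊢
    rw [mem_RepF_succ hc1lt hc2lt hβ1 hβ2] at h ⊢
    rcases h with ⟨e, γ1, γ2, he, hγ1, hγ2, hn⟩
    have helt := RepF_lt he
    have hpow : (2:ℕ)^(r+1) = 2^r + 2^r := by ring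
    have hγle : γ1 + γ2 ≤ 2 := by omega
    interval_cases h : γ1 + γ2
    · simp at hn; omega
    · -- e = 2^r + n + 2^r... e = 2^(r+1) + n - 2^r = 2^r + n
      have he' : e = 2^r + n := by omega
      rw [he'] at he
      exact ⟨n, 0, 0, ih _ _ _ he, by omega, by omega, by simp⟩
    · have he' : e = n := by omega
      rw [he'] at he
      exact ⟨n, 0, 0, he, by omega, by omega, by simp⟩

noncomputable def aF (r c1 c2 : ℕ) : ℕ := ((RepF r c1 c2).filter (fun n => n < 2^r)).card
noncomputable def bF (r c1 c2 : ℕ) : ℕ := ((RepF r c1 c2).filter (fun n => ¬ n < 2^r)).card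

lemma aF_add_bF (r c1 c2 : ℕ) : aF r c1 c2 + bF r c1 c2 = (RepF r c1 c2).card :=
  Finset.card_filter_add_card_filter_not _

lemma bF_le_aF (r c1 c2 : ℕ) : bF r c1 c2 ≤ aF r c1 c2 := by
  apply Finset.card_le_card_of_injOn (fun n => n - 2^r)
  · intro n hn
    simp only [Finset.mem_coe] at hn ⊢
    rw [Finset.mem_filter] at hn ⊢
    obtain ⟨hmem, hge⟩ := hn
    have hlt := RepF_lt hmem
    have h2 : 2^r + (n - 2^r) = n := by omega
    refine ⟨RepF_shift _ _ _ _ (by rw [h2]; exact hmem), ?_⟩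
    have : (2:ℕ)^(r+1) = 2^r + 2^r := by ring
    omega
  · intro x hx y hy hxy
    simp only [Finset.coe_filter, Set.mem_setOf_eq] at hx hy
    have h : x - 2^r = y - 2^r := hxy
    omega

section Steps
variable {r c1 c2 β1 β2 : ℕ}

lemma step_a (h1 : c1 < 2^r) (h2 : c2 < 2^r) (hβ1 : β1 ≤ 1) (hβ2 : β2 ≤ 1) : aF (r+1) (c1 + β1 * 2^r) (c2 + β2 * 2^r) ≤ 2 * aF r c1 c2 := by
  have hpow : (2:ℕ)^(r+1) = 2^r + 2^r := by ring
  have hsub : (RepF (r+1) (c1 + β1 * 2^r) (c2 + β2 * 2^r)).filter (fun n => n < 2^(r+1)) ⊆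
      ((RepF r c1 c2).filter (fun n => n < 2^r)) ∪
      (((RepF r c1 c2).filter (fun n => n < 2^r)).image (fun n => n + 2^r)) := by
    intro n hn
    rw [Finset.mem_filter] at hn
    obtain ⟨hmem, hlt⟩ := hn
    rcases (mem_RepF_succ h1 h2 hβ1 hβ2).mp hmem with ⟨e, γ1, γ2, he, hγ1, hγ2, hn⟩
    have helt := RepF_lt he
    rw [Finset.mem_union]
    have hs : γ1 + γ2 ≤ 2 := by omega
    interval_cases hg : γ1 + γ2
    · -- n = e
      simp only [Nat.zero_mul, Nat.add_zero] at hn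
      by_cases hel : e < 2^r
      · left; rw [Finset.mem_filter]; exact ⟨hn ▸ he, hn ▸ hel⟩
      · right
        rw [Finset.mem_image]
        refine ⟨e - 2^r, ?_, by omega⟩
        rw [Finset.mem_filter]
        have : 2^r + (e - 2^r) = e := by omega
        exact ⟨RepF_shift _ _ _ _ (by rw [this]; exact he), by omega⟩
    · -- n = e + 2^r, n < 2^(r+1) so e < 2^r
      right
      rw [Finset.mem_image]
      refine ⟨e, ?_, by omega⟩
      rw [Finset.mem_filter]
      exact ⟨he, by omega⟩
    · omega
  calc aF (r+1) (c1 + β1 * 2^r) (c2 + β2 * 2^r) ≤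
      (((RepF r c1 c2).filter (fun n => n < 2^r)) ∪
      (((RepF r c1 c2).filter (fun n => n < 2^r)).image (fun n => n + 2^r))).card :=
        Finset.card_le_card hsub
    _ ≤ aF r c1 c2 + aF r c1 c2 := le_trans (Finset.card_union_le _ _)
        (by exact Nat.add_le_add le_rfl (Finset.card_image_le))
    _ = 2 * aF r c1 c2 := by ring

lemma step_a11 (h1 : c1 < 2^r) (h2 : c2 < 2^r) : aF (r+1) (c1 + 1 * 2^r) (c2 + 1 * 2^r) ≤ aF r c1 c2 + bF r c1 c2 := by
  rw [aF_add_bF]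
  apply le_trans (Finset.card_le_card (Finset.filter_subset _ _))
  apply Finset.card_le_card
  intro n hn
  rcases (mem_RepF_succ h1 h2 le_rfl le_rfl).mp hn with ⟨e, γ1, γ2, he, hγ1, hγ2, hne⟩
  obtain ⟨hg1, hg2⟩ : γ1 = 0 ∧ γ2 = 0 := by omega
  subst hg1; subst hg2
  simp only [Nat.zero_mul, Nat.add_zero, Nat.zero_add] at hne
  exact hne ▸ he

lemma step_b11 (h1 : c1 < 2^r) (h2 : c2 < 2^r) : bF (r+1) (c1 + 1 * 2^r) (c2 + 1 * 2^r) = 0 := by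
  rw [bF, Finset.card_eq_zero, Finset.filter_eq_empty_iff]
  intro n hn hlt
  rcases (mem_RepF_succ h1 h2 le_rfl le_rfl).mp hn with ⟨e, γ1, γ2, he, hγ1, hγ2, hne⟩
  obtain ⟨hg1, hg2⟩ : γ1 = 0 ∧ γ2 = 0 := by omega
  subst hg1; subst hg2
  simp only [Nat.zero_mul, Nat.add_zero, Nat.zero_add] at hne
  have helt := RepF_lt he
  omega

lemma step_b_mixed (h1 : c1 < 2^r) (h2 : c2 < 2^r) (hβ1 : β1 ≤ 1) (hβ2 : β2 ≤ 1) (hβs : β1 + β2 = 1) :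
    bF (r+1) (c1 + β1 * 2^r) (c2 + β2 * 2^r) ≤ bF r c1 c2 := by
  have hpow : (2:ℕ)^(r+1) = 2^r + 2^r := by ring
  apply le_trans (Finset.card_le_card (show _ ⊆
      ((RepF r c1 c2).filter (fun n => ¬ n < 2^r)).image (fun n => n + 2^r) from ?_))
    Finset.card_image_le
  intro n hn
  rw [Finset.mem_filter] at hn
  obtain ⟨hmem, hge⟩ := hn
  rcases (mem_RepF_succ h1 h2 hβ1 hβ2).mp hmem with ⟨e, γ1, γ2, he, hγ1, hγ2, hne⟩
  have helt := RepF_lt he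
  have hs : γ1 + γ2 ≤ 1 := by omega
  interval_cases hg : γ1 + γ2
  · omega
  · rw [Finset.mem_image]
    exact ⟨e, Finset.mem_filter.mpr ⟨he, by omega⟩, by omega⟩

lemma step_b00 (h1 : c1 < 2^r) (h2 : c2 < 2^r) : bF (r+1) c1 c2 ≤ aF r c1 c2 + bF r c1 c2 := by
  rw [aF_add_bF]
  have hpow : (2:ℕ)^(r+1) = 2^r + 2^r := by ring
  apply le_trans (Finset.card_le_card (show _ ⊆
      (RepF r c1 c2).image (fun n => n + 2^(r+1)) from ?_)) Finset.card_image_le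
  intro n hn
  rw [Finset.mem_filter] at hn
  obtain ⟨hmem, hge⟩ := hn
  have hmem' : n ∈ RepF (r+1) (c1 + 0 * 2^r) (c2 + 0 * 2^r) := by simpa using hmem
  rcases (mem_RepF_succ h1 h2 (by omega) (by omega)).mp hmem' with ⟨e, γ1, γ2, he, hγ1, hγ2, hne⟩
  have helt := RepF_lt he
  have hs : γ1 + γ2 ≤ 2 := by omega
  rw [Finset.mem_image]
  interval_cases hg : γ1 + γ2
  · omega
  · -- n = e + 2^r ≥ 2^(r+1) so e ≥ 2^r
    refine ⟨e - 2^r, ?_, by omega⟩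
    have : 2^r + (e - 2^r) = e := by omega
    exact RepF_shift _ _ _ _ (by rw [this]; exact he)
  · exact ⟨e, he, by omega⟩

end Steps

noncomputable def SA (r : ℕ) : ℕ :=
  ∑ c1 ∈ Finset.range (2^r), ∑ c2 ∈ Finset.range (2^r), aF r c1 c2
noncomputable def SB (r : ℕ) : ℕ :=
  ∑ c1 ∈ Finset.range (2^r), ∑ c2 ∈ Finset.range (2^r), bF r c1 c2

lemma sum_split (r : ℕ) (f : ℕ → ℕ → ℕ) :
    ∑ c1 ∈ Finset.range (2^(r+1)), ∑ c2 ∈ Finset.range (2^(r+1)), f c1 c2 =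
    ∑ c1 ∈ Finset.range (2^r), ∑ c2 ∈ Finset.range (2^r),
      (f c1 c2 + f c1 (2^r + c2) + f (2^r + c1) c2 + f (2^r + c1) (2^r + c2)) := by
  have hpow : (2:ℕ)^(r+1) = 2^r + 2^r := by ring
  rw [hpow, Finset.sum_range_add]
  have inner : ∀ c1, ∑ c2 ∈ Finset.range (2^r + 2^r), f c1 c2 =
      ∑ c2 ∈ Finset.range (2^r), (f c1 c2 + f c1 (2^r + c2)) := by
    intro c1; rw [Finset.sum_range_add, ← Finset.sum_add_distrib]
  simp only [inner]
  rw [← Finset.sum_add_distrib]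
  apply Finset.sum_congr rfl
  intro c1 _
  rw [← Finset.sum_add_distrib]
  apply Finset.sum_congr rfl
  intro c2 _
  ring

lemma SA_step (r : ℕ) : SA (r+1) ≤ 7 * SA r + SB r := by
  rw [SA, sum_split]
  have hb : ∀ c1 ∈ Finset.range (2^r), ∀ c2 ∈ Finset.range (2^r),
      aF (r+1) c1 c2 + aF (r+1) c1 (2^r + c2) + aF (r+1) (2^r + c1) c2 +
        aF (r+1) (2^r + c1) (2^r + c2) ≤ 7 * aF r c1 c2 + bF r c1 c2 := by
    intro c1 hc1 c2 hc2
    rw [Finset.mem_range] at hc1 hc2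
    have h00 : aF (r+1) c1 c2 ≤ 2 * aF r c1 c2 := by
      simpa [Nat.add_comm] using step_a (β1:=0) (β2:=0) hc1 hc2 (by norm_num) (by norm_num)
    have h01 : aF (r+1) c1 (2^r + c2) ≤ 2 * aF r c1 c2 := by
      simpa [Nat.add_comm] using step_a (β1:=0) (β2:=1) hc1 hc2 (by norm_num) (by norm_num)
    have h10 : aF (r+1) (2^r + c1) c2 ≤ 2 * aF r c1 c2 := by
      simpa [Nat.add_comm] using step_a (β1:=1) (β2:=0) hc1 hc2 (by norm_num) (by norm_num)
    have h11 : aF (r+1) (2^r + c1) (2^r + c2) ≤ aF r c1 c2 + bF r c1 c2 := by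
      simpa [Nat.add_comm] using step_a11 hc1 hc2
    omega
  calc (∑ c1 ∈ Finset.range (2^r), ∑ c2 ∈ Finset.range (2^r),
      (aF (r+1) c1 c2 + aF (r+1) c1 (2^r + c2) + aF (r+1) (2^r + c1) c2 +
        aF (r+1) (2^r + c1) (2^r + c2)))
      ≤ ∑ c1 ∈ Finset.range (2^r), ∑ c2 ∈ Finset.range (2^r),
        (7 * aF r c1 c2 + bF r c1 c2) := by
        apply Finset.sum_le_sum; intro c1 hc1
        apply Finset.sum_le_sum; intro c2 hc2
        exact hb c1 hc1 c2 hc2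
    _ = 7 * SA r + SB r := by
        rw [SA, SB, Finset.mul_sum, ← Finset.sum_add_distrib]
        apply Finset.sum_congr rfl
        intro c1 _
        rw [Finset.mul_sum, ← Finset.sum_add_distrib]

lemma SB_step (r : ℕ) : SB (r+1) ≤ SA r + 3 * SB r := by
  rw [SB, sum_split]
  have hb : ∀ c1 ∈ Finset.range (2^r), ∀ c2 ∈ Finset.range (2^r),
      bF (r+1) c1 c2 + bF (r+1) c1 (2^r + c2) + bF (r+1) (2^r + c1) c2 +
        bF (r+1) (2^r + c1) (2^r + c2) ≤ aF r c1 c2 + 3 * bF r c1 c2 := by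
    intro c1 hc1 c2 hc2
    rw [Finset.mem_range] at hc1 hc2
    have h00 : bF (r+1) c1 c2 ≤ aF r c1 c2 + bF r c1 c2 := step_b00 hc1 hc2
    have h01 : bF (r+1) c1 (2^r + c2) ≤ bF r c1 c2 := by
      simpa [Nat.add_comm] using step_b_mixed (β1:=0) (β2:=1) hc1 hc2 (by norm_num) (by norm_num) (by norm_num)
    have h10 : bF (r+1) (2^r + c1) c2 ≤ bF r c1 c2 := by
      simpa [Nat.add_comm] using step_b_mixed (β1:=1) (β2:=0) hc1 hc2 (by norm_num) (by norm_num) (by norm_num)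
    have h11 : bF (r+1) (2^r + c1) (2^r + c2) = 0 := by
      simpa [Nat.add_comm] using step_b11 hc1 hc2
    omega
  calc (∑ c1 ∈ Finset.range (2^r), ∑ c2 ∈ Finset.range (2^r),
      (bF (r+1) c1 c2 + bF (r+1) c1 (2^r + c2) + bF (r+1) (2^r + c1) c2 +
        bF (r+1) (2^r + c1) (2^r + c2)))
      ≤ ∑ c1 ∈ Finset.range (2^r), ∑ c2 ∈ Finset.range (2^r),
        (aF r c1 c2 + 3 * bF r c1 c2) := by
        apply Finset.sum_le_sum; intro c1 hc1
        apply Finset.sum_le_sum; intro c2 hc2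
        exact hb c1 hc1 c2 hc2
    _ = SA r + 3 * SB r := by
        rw [SA, SB, Finset.mul_sum, ← Finset.sum_add_distrib]
        apply Finset.sum_congr rfl
        intro c1 _
        rw [Finset.mul_sum, ← Finset.sum_add_distrib]

lemma SB_le_SA (r : ℕ) : SB r ≤ SA r := by
  rw [SA, SB]
  apply Finset.sum_le_sum; intro c1 _
  apply Finset.sum_le_sum; intro c2 _
  exact bF_le_aF r c1 c2

lemma RepF_zero : RepF 0 0 0 = {0} := by
  ext n
  rw [mem_RepF]
  simp only [Finset.mem_singleton]
  constructor
  · rintro ⟨d1, d2, h1, h2, _, _, h5⟩; omega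
  · rintro rfl
    exact ⟨0, 0, by norm_num, by norm_num,
      fun i hi => absurd hi (by simp [Nat.zero_testBit]),
      fun i hi => absurd hi (by simp [Nat.zero_testBit]), rfl⟩

lemma SA_zero : SA 0 = 1 := by
  rw [SA]
  norm_num
  rw [aF, RepF_zero]
  rw [Finset.filter_eq_self.mpr (by intro x hx; simp at hx; simp [hx])]
  simp

lemma SB_zero : SB 0 = 0 := by
  rw [SB]
  norm_num
  rw [bF, RepF_zero]
  rw [Finset.filter_eq_empty_iff.mpr (by intro x hx; simp at hx; simp [hx])]
  simp

lemma phi_bound (r : ℕ) :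
    (SA r : ℝ) + (Real.sqrt 5 - 2) * SB r ≤ (5 + Real.sqrt 5)^r := by
  have hs : Real.sqrt 5 ^ 2 = 5 := Real.sq_sqrt (by norm_num)
  have hs2 : (2:ℝ) ≤ Real.sqrt 5 := by nlinarith [Real.sqrt_nonneg 5]
  induction r with
  | zero => simp [SA_zero, SB_zero]
  | succ r ih =>
    set s := Real.sqrt 5 with hsdef
    have hA : (SA (r+1) : ℝ) ≤ 7 * SA r + SB r := by exact_mod_cast SA_step r
    have hB : (SB (r+1) : ℝ) ≤ (SA r : ℝ) + 3 * SB r := by exact_mod_cast SB_step r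
    have hγ : (0:ℝ) ≤ s - 2 := by linarith
    have h1 : (s - 2) * (SB (r+1) : ℝ) ≤ (s - 2) * ((SA r : ℝ) + 3 * SB r) :=
      mul_le_mul_of_nonneg_left hB hγ
    have hkey : 7 * (SA r : ℝ) + SB r + (s - 2) * ((SA r : ℝ) + 3 * SB r) =
        (5 + s) * ((SA r : ℝ) + (s - 2) * SB r) := by
      linear_combination -(SB r : ℝ) * hs
    calc (SA (r+1) : ℝ) + (s - 2) * SB (r+1)
        ≤ (7 * (SA r : ℝ) + SB r) + (s - 2) * ((SA r : ℝ) + 3 * SB r) := by linarith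
      _ = (5 + s) * ((SA r : ℝ) + (s - 2) * SB r) := hkey
      _ ≤ (5 + s) * (5 + s)^r := by
          apply mul_le_mul_of_nonneg_left ih (by linarith)
      _ = (5 + s)^(r+1) := by ring

lemma total_bound (r : ℕ) :
    ((SA r : ℝ) + SB r) ≤ 2 * (5 + Real.sqrt 5)^r := by
  have hs : Real.sqrt 5 ^ 2 = 5 := Real.sq_sqrt (by norm_num)
  have hs2 : (2:ℝ) ≤ Real.sqrt 5 := by nlinarith [Real.sqrt_nonneg 5]
  have hs3 : Real.sqrt 5 ≤ 3 := by nlinarith [Real.sqrt_nonneg 5]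
  have hba : (SB r : ℝ) ≤ SA r := by exact_mod_cast SB_le_SA r
  have hph := phi_bound r
  have hbnn : (0:ℝ) ≤ SB r := Nat.cast_nonneg _
  nlinarith [hph, hba, hbnn]

lemma shadow_decomp : ∀ a c : ℕ, Shadow2 c a → ∃ d, BDisj d c ∧ c + d = a := by
  intro a
  induction a using Nat.strong_induction_on with
  | _ a ih =>
    intro c hs
    rcases Nat.eq_zero_or_pos a with rfl | ha
    · have hc : c = 0 := by
        apply Nat.zero_of_testBit_eq_false
        intro i
        by_contra hb
        have := hs i (by simpa using hb)
        simp [Nat.zero_testBit] at this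
      exact ⟨0, fun i hi => by simp [Nat.zero_testBit] at hi, by omega⟩
    · have hs' : Shadow2 (c / 2) (a / 2) := by
        intro i hi
        rw [Nat.testBit_div_two] at hi ⊢
        exact hs _ hi
      obtain ⟨d', hb', heq'⟩ := ih (a / 2) (by omega) (c / 2) hs'
      have hp : c % 2 ≤ a % 2 := by
        rcases Nat.mod_two_eq_zero_or_one c with h | h
        · omega
        · have hc0 : c.testBit 0 = true := by rw [Nat.testBit_zero]; simp [h]
          have := hs 0 hc0
          rw [Nat.testBit_zero] at this
          simp at this
          omega
      refine ⟨2 * d' + (a % 2 - c % 2), ?_, by omega⟩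
      intro i hi
      cases i with
      | zero =>
        rw [Nat.testBit_zero] at hi ⊢
        have hd : (2 * d' + (a % 2 - c % 2)) % 2 = a % 2 - c % 2 := by omega
        rw [hd] at hi
        simp at hi
        simp
        omega
      | succ i =>
        rw [Nat.testBit_add_one] at hi ⊢
        have hd : (2 * d' + (a % 2 - c % 2)) / 2 = d' := by omega
        rw [hd] at hi
        exact hb' i hi

lemma card_F_le (r : ℕ) :
    ((Finset.range (2 ^ r - 1) ×ˢ Finset.range (2 ^ (2 * r) - 1)).filter
      (fun p => ∃ a < 2 ^ (2 * r), a % (2 ^ r - 1) = p.1 ∧ Shadow2 p.2 a)).card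
    ≤ SA r + SB r := by
  classical
  set M := 2 ^ r - 1 with hM
  set Q := 2 ^ (2 * r) with hQ
  have hpos : (0:ℕ) < 2^r := Nat.two_pow_pos _
  have hMe : M + 1 = 2^r := by rw [hM]; omega
  have hQe : Q = 2^r * 2^r := by rw [hQ, two_mul, pow_add]
  set F := (Finset.range M ×ˢ Finset.range (Q - 1)).filter
      (fun p => ∃ a < Q, a % M = p.1 ∧ Shadow2 p.2 a) with hF
  have hmaps : ∀ p ∈ F, p.2 ∈ Finset.range (Q - 1) := by
    intro p hp
    rw [hF, Finset.mem_filter, Finset.mem_product] at hp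
    exact hp.1.2
  rw [Finset.card_eq_sum_card_fiberwise hmaps]
  have hfiber : ∀ c ∈ Finset.range (Q - 1),
      (F.filter (fun p => p.2 = c)).card ≤ (RepF r (c % 2^r) (c / 2^r)).card := by
    intro c _
    have h1 : (F.filter (fun p => p.2 = c)).card ≤
        ((RepF r (c % 2^r) (c / 2^r)).image
          (fun n => (n + c % 2^r + c / 2^r) % M)).card := by
      apply Finset.card_le_card_of_injOn Prod.fst
      · intro p hp
        simp only [Finset.mem_coe] at hp ⊢
        rw [Finset.mem_filter, hF, Finset.mem_filter, Finset.mem_product] at hp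
        obtain ⟨⟨⟨hp1, _⟩, a, ha, hai, hash⟩, hpc⟩ := hp
        subst hpc
        have hahi : a / 2^r < 2^r := by
          rw [Nat.div_lt_iff_lt_mul hpos]; omega
        have hs1 : Shadow2 (p.2 % 2^r) (a % 2^r) := by
          intro i hi
          rw [Nat.testBit_mod_two_pow] at hi ⊢
          have h1 : i < r := by
            by_contra hc
            simp [show ¬ i < r from hc] at hi
          simp only [show (decide (i < r)) = true by simp [h1], Bool.true_and] at hi ⊢
          exact hash i hi
        have hs2 : Shadow2 (p.2 / 2^r) (a / 2^r) := by
          intro i hi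
          rw [tb_div_pow] at hi ⊢
          exact hash _ hi
        obtain ⟨d1, hbd1, hd1⟩ := shadow_decomp _ _ hs1
        obtain ⟨d2, hbd2, hd2⟩ := shadow_decomp _ _ hs2
        have halo : a % 2^r < 2^r := Nat.mod_lt _ hpos
        have hd1lt : d1 < 2^r :=
          lt_of_le_of_lt (Nat.le.intro (by rw [Nat.add_comm]; exact hd1)) halo
        have hd2lt : d2 < 2^r :=
          lt_of_le_of_lt (Nat.le.intro (by rw [Nat.add_comm]; exact hd2)) hahi
        have hmem : d1 + d2 ∈ RepF r (p.2 % 2^r) (p.2 / 2^r) :=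
          mem_RepF.mpr ⟨d1, d2, hd1lt, hd2lt, hbd1, hbd2, rfl⟩
        rw [Finset.mem_image]
        refine ⟨d1 + d2, hmem, ?_⟩
        have hmodeq : a % M = (a / 2^r + a % 2^r) % M := by
          have h2 : (2^r) % M = 1 % M := by
            conv_lhs => rw [← hMe]
            exact Nat.add_mod_left M 1
          have h3 : a = 2^r * (a / 2^r) + a % 2^r := (Nat.div_add_mod _ _).symm
          calc a % M = (2^r * (a / 2^r) + a % 2^r) % M := by rw [← h3]
            _ = (1 * (a / 2^r) + a % 2^r) % M :=
              Nat.ModEq.add_right _ (Nat.ModEq.mul_right _ h2)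
            _ = (a / 2^r + a % 2^r) % M := by rw [one_mul]
        have harith : a / 2^r + a % 2^r = d1 + d2 + p.2 % 2^r + p.2 / 2^r := by omega
        rw [← hai, hmodeq, harith]
      · intro p hp q hq hpq
        simp only [Finset.coe_filter, Set.mem_setOf_eq] at hp hq
        have : p.2 = q.2 := by rw [hp.2, hq.2]
        exact Prod.ext hpq this
    exact le_trans h1 Finset.card_image_le
  calc ∑ c ∈ Finset.range (Q - 1), (F.filter (fun p => p.2 = c)).card
      ≤ ∑ c ∈ Finset.range (Q - 1), (RepF r (c % 2^r) (c / 2^r)).card :=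
        Finset.sum_le_sum hfiber
    _ ≤ ∑ c ∈ Finset.range Q, (RepF r (c % 2^r) (c / 2^r)).card :=
        Finset.sum_le_sum_of_subset (Finset.range_subset_range.mpr (by omega))
    _ = ∑ p ∈ Finset.range (2^r) ×ˢ Finset.range (2^r), (RepF r p.1 p.2).card := by
        apply Finset.sum_nbij' (i := fun c => (c % 2^r, c / 2^r))
          (j := fun p => p.1 + 2^r * p.2)
        · intro c hc
          rw [Finset.mem_range] at hc
          rw [Finset.mem_product, Finset.mem_range, Finset.mem_range]
          exact ⟨Nat.mod_lt _ hpos, by rw [Nat.div_lt_iff_lt_mul hpos]; omega⟩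
        · intro p hp
          rw [Finset.mem_product, Finset.mem_range, Finset.mem_range] at hp
          rw [Finset.mem_range, hQe]
          obtain ⟨h1, h2⟩ := hp
          calc p.1 + 2^r * p.2 < 2^r + 2^r * p.2 := by omega
            _ ≤ 2^r + 2^r * (2^r - 1) := by
                have : p.2 ≤ 2^r - 1 := by omega
                exact Nat.add_le_add_left (Nat.mul_le_mul_left _ this) _
            _ = 2^r * 2^r := by
                have h3 : (1:ℕ) ≤ 2^r := hpos
                have h4 : 2^r ≤ 2^r * 2^r := Nat.le_mul_of_pos_right _ hpos
                rw [Nat.mul_sub, Nat.mul_one]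
                omega
        · intro c _
          exact Nat.mod_add_div c (2^r)
        · intro p hp
          rw [Finset.mem_product, Finset.mem_range, Finset.mem_range] at hp
          have h1 : (p.1 + 2^r * p.2) % 2^r = p.1 := by
            rw [Nat.add_mul_mod_self_left, Nat.mod_eq_of_lt hp.1]
          have h2 : (p.1 + 2^r * p.2) / 2^r = p.2 := by
            rw [Nat.add_mul_div_left _ _ hpos, Nat.div_eq_of_lt hp.1, Nat.zero_add]
          rw [h1, h2]
        · intro c _
          rfl
    _ = SA r + SB r := by
        rw [SA, SB, ← Finset.sum_add_distrib, Finset.sum_product]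
        apply Finset.sum_congr rfl
        intro c1 _
        rw [← Finset.sum_add_distrib]
        apply Finset.sum_congr rfl
        intro c2 _
        exact (aF_add_bF r c1 c2).symm

/-- For `q = 2^ℓ` with `ℓ = 2r` even, the number `e(√q - 1, q - 1)` of valid
pairs `(i, c)` with `i < √q - 1`, `c < q - 1` such that some `a ∈ [q]` has
`a ≡ i (mod √q - 1)` and `c ≤₂ a`, is `O((5 + √5)^(ℓ/2))`. -/
theorem eST_bound :
    ∃ C : ℝ, 0 < C ∧ ∀ r : ℕ,
      ((((Finset.range (2 ^ r - 1) ×ˢ Finset.range (2 ^ (2 * r) - 1)).filter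
          (fun p => ∃ a < 2 ^ (2 * r),
            a % (2 ^ r - 1) = p.1 ∧ Shadow2 p.2 a)).card : ℝ))
        ≤ C * (5 + Real.sqrt 5) ^ r := by
  refine ⟨2, by norm_num, fun r => ?_⟩
  have h1 := card_F_le r
  have h2 := total_bound r
  have h3 : ((((Finset.range (2 ^ r - 1) ×ˢ Finset.range (2 ^ (2 * r) - 1)).filter
      (fun p => ∃ a < 2 ^ (2 * r),
        a % (2 ^ r - 1) = p.1 ∧ Shadow2 p.2 a)).card : ℝ)) ≤ (SA r : ℝ) + SB r := by
    exact_mod_cast h1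
  linarith
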